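/- Let t(k) = #{(a,b,c) ∈ ℕ³ : 2a+3b+4c = k}. Then for every integer k ≥ 0 one has the recurrence relations t(2k+3) = t(2k) and t(2k+13) = t(2k+1) + k + 5. -/

import Mathlib

open Complex Filter Finset Real

noncomputable section

/-- The lattice point `m + n·τ` associated with `p = (m, n) ∈ ℤ × ℤ`. -/
def latP (τ : ℂ) (p : ℤ × ℤ) : ℂ := (p.1 : ℂ) + (p.2 : ℂ) * τ

/-- The lattice `ℤ + τℤ` in `ℂ`. -/
def lat (τ : ℂ) : Set ℂ := {w : ℂ | ∃ p : ℤ × ℤ, w = latP τ p}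

/-- The Weierstrass ℘-function of the lattice `ℤ + τℤ`. -/
def wp (τ z : ℂ) : ℂ :=
  1 / z ^ 2 + ∑' p : ℤ × ℤ, if p ≠ 0 then 1 / (z - latP τ p) ^ 2 - 1 / latP τ p ^ 2 else 0

/-- The partial derivative `∂_z ℘`. -/
def wpz (τ z : ℂ) : ℂ := deriv (wp τ) z

/-- The Eisenstein series `e_k(τ) = Σ_{w ∈ Λ_τ ∖ {0}} w^{-k}`. -/
def eis (k : ℕ) (τ : ℂ) : ℂ := ∑' p : ℤ × ℤ, if p ≠ 0 then 1 / latP τ p ^ k else 0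

def e4 : ℂ → ℂ := eis 4
def e6 : ℂ → ℂ := eis 6

/-- The weight 2 Eisenstein series `e₂`. -/
def e2 (τ : ℂ) : ℂ :=
  (π : ℂ) ^ 2 / 3 *
    (1 - 24 * ∑' n : ℕ, (∑ d ∈ (n + 1).divisors, (d : ℂ)) * Complex.exp (2 * π * I * (n + 1) * τ))

/-- Inner (Eichler) sum in the definition of `E₁`. -/
def E1inner (τ z : ℂ) (m : ℤ) : ℂ :=
  limUnder atTop fun N : ℕ =>
    ∑ n ∈ Finset.Icc (-(N : ℤ)) (N : ℤ),
      if (m, n) ≠ ((0 : ℤ), (0 : ℤ)) then 1 / (z + m + n * τ) else 0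

/-- The first shifted Eisenstein function `E₁` (Eichler summation). -/
def E1 (τ z : ℂ) : ℂ :=
  limUnder atTop fun M : ℕ => ∑ m ∈ Finset.Icc (-(M : ℤ)) (M : ℤ), E1inner τ z m

/-- The Jacobi group `SL(2,ℤ) ⋉ ℤ²`. -/
abbrev JacobiGroup : Type := Matrix.SpecialLinearGroup (Fin 2) ℤ × ℤ × ℤ

def ja (A : JacobiGroup) : ℂ := ((A.1 0 0 : ℤ) : ℂ)
def jb (A : JacobiGroup) : ℂ := ((A.1 0 1 : ℤ) : ℂ)
def jc (A : JacobiGroup) : ℂ := ((A.1 1 0 : ℤ) : ℂ)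
def jd (A : JacobiGroup) : ℂ := ((A.1 1 1 : ℤ) : ℂ)
def jlam (A : JacobiGroup) : ℂ := (A.2.1 : ℂ)
def jmu (A : JacobiGroup) : ℂ := (A.2.2 : ℂ)

/-- Multiplication `(g,Λ)(g',Λ') = (gg', Λg' + Λ')` of the Jacobi group. -/
def jmul (A B : JacobiGroup) : JacobiGroup :=
  (A.1 * B.1,
    (A.2.1 * B.1 0 0 + A.2.2 * B.1 1 0 + B.2.1,
     A.2.1 * B.1 0 1 + A.2.2 * B.1 1 1 + B.2.2))

/-- The weight `k`, index-zero action of the Jacobi group on functions `ℂ → ℂ → ℂ`. -/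
def jslash (k : ℤ) (f : ℂ → ℂ → ℂ) (A : JacobiGroup) : ℂ → ℂ → ℂ := fun τ z =>
  (jc A * τ + jd A) ^ (-k) *
    f ((ja A * τ + jb A) / (jc A * τ + jd A))
      ((z + jlam A * τ + jmu A) / (jc A * τ + jd A))

def Jfun (A : JacobiGroup) : ℂ → ℂ → ℂ := fun τ _ => jc A * τ + jd A

def Xfun (A : JacobiGroup) : ℂ → ℂ → ℂ := fun τ _ => jc A / (jc A * τ + jd A)

def Yfun (A : JacobiGroup) : ℂ → ℂ → ℂ := fun τ z =>
  (jc A * z + jc A * jmu A - jd A * jlam A) / (jc A * τ + jd A)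

/-- A singular function on `ℋ × ℂ`. -/
def IsSingular (f : ℂ → ℂ → ℂ) : Prop :=
  ∃ p : ℕ,
    (∀ τ : ℂ, 0 < τ.im →
      (∀ z : ℂ, f τ (z + 1) = f τ z) ∧
      DifferentiableOn ℂ (f τ) (lat τ)ᶜ ∧
      ∀ w ∈ lat τ,
        (p = 0 → AnalyticAt ℂ (f τ) w) ∧
        (0 < p → ∃ _ : MeromorphicAt (f τ) w, meromorphicOrderAt (f τ) w = (-(p : ℤ) : WithTop ℤ))) ∧
    (∀ τ : ℂ, 0 < τ.im → ∀ z : ℂ, f (τ + 1) z = f τ z) ∧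
    ∃ (L : ℕ → ℂ → ℂ) (cf : ℕ → ℕ → ℂ),
      (∀ τ : ℂ, 0 < τ.im → ∃ ε > 0, ∀ z : ℂ, z ≠ 0 → ‖z‖ < ε →
        f τ z = ∑' n : ℕ, L n τ * z ^ ((n : ℤ) - (p : ℤ))) ∧
      (∀ n, DifferentiableOn ℂ (L n) {τ : ℂ | 0 < τ.im}) ∧
      (∀ n, ∀ τ : ℂ, 0 < τ.im → L n τ = ∑' r : ℕ, cf n r * Complex.exp (2 * π * I * (r : ℂ) * τ))

/-- A singular Jacobi form of index zero and weight `k`. -/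
def IsSingularJacobiForm (k : ℤ) (f : ℂ → ℂ → ℂ) : Prop :=
  IsSingular f ∧
    ∀ A : JacobiGroup, ∀ τ z : ℂ, 0 < τ.im → z ∉ lat τ → jslash k f A τ z = f τ z

/-- The modular derivation `∂_τ = (π/(2i)) ∂/∂τ`. -/
def dtau (f : ℂ → ℂ → ℂ) : ℂ → ℂ → ℂ := fun τ z =>
  (π : ℂ) / (2 * I) * deriv (fun t => f t z) τ

/-- The elliptic derivation `∂_z`. -/
def dz (f : ℂ → ℂ → ℂ) : ℂ → ℂ → ℂ := fun τ z => deriv (f τ) z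

/-- The Oberdieck derivation on forms of weight `k`. -/
def Obstar (k : ℤ) (f : ℂ → ℂ → ℂ) : ℂ → ℂ → ℂ := fun τ z =>
  4 * dtau f τ z + E1 τ z * dz f τ z - (k : ℂ) * e2 τ * f τ z

/-- `t k` is the number of triples `(a,b,c) ∈ ℕ³` with `2a+3b+4c = k`. -/
def tJS (k : ℕ) : ℕ := Nat.card {t : ℕ × ℕ × ℕ // 2 * t.1 + 3 * t.2.1 + 4 * t.2.2 = k}


/-- Auxiliary finite set of solutions of `2a+3b+4c = k`. -/
def TS (k : ℕ) : Finset (ℕ × ℕ × ℕ) :=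
  ((Finset.range (k+1)) ×ˢ (Finset.range (k+1)) ×ˢ (Finset.range (k+1))).filter
    (fun t => 2 * t.1 + 3 * t.2.1 + 4 * t.2.2 = k)

lemma mem_TS {k : ℕ} {t : ℕ × ℕ × ℕ} :
    t ∈ TS k ↔ 2 * t.1 + 3 * t.2.1 + 4 * t.2.2 = k := by
  simp only [TS, Finset.mem_filter, Finset.mem_product, Finset.mem_range]
  constructor
  · rintro ⟨_, h⟩; exact h
  · intro h; refine ⟨⟨?_, ?_, ?_⟩, h⟩ <;> omega

lemma tJS_eq_card (k : ℕ) : tJS k = (TS k).card := by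
  rw [tJS, ← Nat.card_eq_finsetCard]
  exact Nat.card_congr (Equiv.subtypeEquivRight (fun t => mem_TS.symm))

lemma card_odd_shift (k : ℕ) : (TS (2 * k + 3)).card = (TS (2 * k)).card := by
  apply Finset.card_nbij' (fun t => (t.1, t.2.1 - 1, t.2.2)) (fun t => (t.1, t.2.1 + 1, t.2.2))
  · rintro ⟨a, b, c⟩ ht; simp only [Finset.mem_coe, mem_TS] at *; omega
  · rintro ⟨a, b, c⟩ ht; simp only [Finset.mem_coe, mem_TS] at *; omega
  · rintro ⟨a, b, c⟩ ht; simp only [Finset.mem_coe, mem_TS] at ht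
    simp only [Prod.mk.injEq, and_true, true_and]; omega
  · rintro ⟨a, b, c⟩ ht; simp only [Finset.mem_coe, mem_TS] at ht
    simp only [Prod.mk.injEq, and_true, true_and]; omega

lemma card_cge3 (k : ℕ) :
    ((TS (2 * k + 13)).filter (fun t => 3 ≤ t.2.2)).card = (TS (2 * k + 1)).card := by
  apply Finset.card_nbij' (fun t => (t.1, t.2.1, t.2.2 - 3)) (fun t => (t.1, t.2.1, t.2.2 + 3))
  · rintro ⟨a, b, c⟩ ht; simp only [Finset.mem_coe, Finset.mem_filter, mem_TS] at *; omega
  · rintro ⟨a, b, c⟩ ht; simp only [Finset.mem_coe, Finset.mem_filter, mem_TS] at *; omega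
  · rintro ⟨a, b, c⟩ ht; simp only [Finset.mem_coe, Finset.mem_filter, mem_TS] at ht
    simp only [Prod.mk.injEq, and_true, true_and]; omega
  · rintro ⟨a, b, c⟩ ht; simp only [Finset.mem_coe, mem_TS] at ht
    simp only [Prod.mk.injEq, and_true, true_and]; omega

lemma card_slice (n m c0 : ℕ) (h : n = 2 * m + 3 + 4 * c0) :
    ((TS n).filter (fun t => t.2.2 = c0)).card = m / 3 + 1 := by
  rw [← Finset.card_range (m / 3 + 1)]
  apply Finset.card_nbij' (fun t => t.2.1 / 2) (fun j => (m - 3 * j, 2 * j + 1, c0))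
  · rintro ⟨a, b, c⟩ ht
    simp only [Finset.mem_coe, Finset.mem_filter, mem_TS, Finset.mem_range, and_true, true_and] at *; omega
  · intro j hj
    simp only [Finset.mem_coe, Finset.mem_filter, mem_TS, Finset.mem_range, and_true, true_and] at *; omega
  · rintro ⟨a, b, c⟩ ht; simp only [Finset.mem_coe, Finset.mem_filter, mem_TS] at ht
    simp only [Prod.mk.injEq, and_true, true_and]; omega
  · intro j hj; simp only [Finset.mem_coe, Finset.mem_range] at hj; simp only []; omega

lemma card_13 (k : ℕ) :
    (TS (2 * k + 13)).card = (TS (2 * k + 1)).card + k + 5 := by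
  have hsplit := Finset.card_filter_add_card_filter_not
    (s := TS (2 * k + 13)) (p := fun t => 3 ≤ t.2.2)
  have h012 : (TS (2 * k + 13)).filter (fun t => ¬ 3 ≤ t.2.2) =
      ((TS (2 * k + 13)).filter (fun t => t.2.2 = 0)) ∪
      ((TS (2 * k + 13)).filter (fun t => t.2.2 = 1)) ∪
      ((TS (2 * k + 13)).filter (fun t => t.2.2 = 2)) := by
    ext t
    simp only [Finset.mem_filter, Finset.mem_union, ← and_or_left]
    exact and_congr_right (fun _ => by omega)
  have hd1 : Disjoint ((TS (2 * k + 13)).filter (fun t => t.2.2 = 0))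
      ((TS (2 * k + 13)).filter (fun t => t.2.2 = 1)) := by
    simp only [Finset.disjoint_left, Finset.mem_filter]
    rintro t ⟨_, h0⟩ ⟨_, h1⟩; omega
  have hd2 : Disjoint (((TS (2 * k + 13)).filter (fun t => t.2.2 = 0)) ∪
      ((TS (2 * k + 13)).filter (fun t => t.2.2 = 1)))
      ((TS (2 * k + 13)).filter (fun t => t.2.2 = 2)) := by
    simp only [Finset.disjoint_left, Finset.mem_union, Finset.mem_filter]
    rintro t (⟨_, h0⟩ | ⟨_, h1⟩) ⟨_, h2⟩ <;> omega
  have c0 := card_slice (2 * k + 13) (k + 5) 0 (by ring)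
  have c1 := card_slice (2 * k + 13) (k + 3) 1 (by ring)
  have c2 := card_slice (2 * k + 13) (k + 1) 2 (by ring)
  have hge := card_cge3 k
  rw [h012, Finset.card_union_of_disjoint hd2, Finset.card_union_of_disjoint hd1,
    c0, c1, c2, hge] at hsplit
  omega

/-- Recurrence relations for the dimensions `t(k)`. -/
theorem tJS_recurrences (k : ℕ) :
    tJS (2 * k + 3) = tJS (2 * k) ∧ tJS (2 * k + 13) = tJS (2 * k + 1) + k + 5 := by
  constructor
  · rw [tJS_eq_card, tJS_eq_card]; exact card_odd_shift k
  · rw [tJS_eq_card, tJS_eq_card, card_13 k]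

end
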